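/- arXiv:2605.28967 — 2 statements merged into one kernel-verified Lean document; each statement's English description precedes it below -/
import Mathlib

section
/- Let ρ be a density matrix on a finite-dimensional complex space, let Ω be a nonempty finite index set, and let (O_x)_{x ∈ Ω} be matrices of the same size as ρ. Then the averaged two-point fidelity correlator dominates the square of the averaged one-point fidelity correlator: (1/|Ω|²) Σ_{x,y ∈ Ω} F(ρ, (O_x O_y†) ρ (O_x O_y†)†) ≥ ( (1/|Ω|) Σ_{x ∈ Ω} F(ρ, O_x ρ O_x†) )². -/
noncomputable section

open scoped Matrix Kronecker ComplexOrder

/-- The positive semidefinite square root of a matrix (defaults to `0` if not PSD). -/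
noncomputable def matSqrt {n : Type*} [Fintype n] [DecidableEq n] (M : Matrix n n ℂ) :
    Matrix n n ℂ :=
  open scoped Classical in
  if h : M.PosSemidef then
    h.1.eigenvectorUnitary.1 * Matrix.diagonal ((↑) ∘ (√·) ∘ h.1.eigenvalues) *
      (star h.1.eigenvectorUnitary : Matrix n n ℂ)
  else 0

/-- The fidelity `F(ρ, σ) = tr √(√ρ σ √ρ)` of two PSD matrices. -/
noncomputable def fidelity {n : Type*} [Fintype n] [DecidableEq n] (ρ σ : Matrix n n ℂ) : ℝ :=
  (matSqrt (matSqrt ρ * σ * matSqrt ρ)).trace.re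

/-- The ℓ²→ℓ² operator norm of a complex matrix. -/
noncomputable def opNorm {m n : Type*} [Fintype m] [Fintype n] [DecidableEq n]
    (M : Matrix m n ℂ) : ℝ :=
  ‖(Matrix.toEuclideanLin.trans LinearMap.toContinuousLinearMap) M‖

/-- Partial trace over the second tensor factor. -/
noncomputable def ptraceB {A B : Type*} [Fintype B]
    (ρ : Matrix (A × B) (A × B) ℂ) : Matrix A A ℂ :=
  Matrix.of fun a a' => ∑ b : B, ρ (a, b) (a', b)

namespace Matrix.PosSemidef

variable {n : Type*} [Fintype n] [DecidableEq n]

/-- the PSD square root built from the eigendecomposition -/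
noncomputable def sqrt {M : Matrix n n ℂ} (h : M.PosSemidef) : Matrix n n ℂ :=
  h.1.eigenvectorUnitary.1 * Matrix.diagonal ((↑) ∘ (√·) ∘ h.1.eigenvalues) *
    (star h.1.eigenvectorUnitary : Matrix n n ℂ)

lemma posSemidef_sqrt {M : Matrix n n ℂ} (h : M.PosSemidef) : h.sqrt.PosSemidef := by
  unfold sqrt
  show (_ * _ * (h.1.eigenvectorUnitary.1)ᴴ).PosSemidef
  apply Matrix.PosSemidef.mul_mul_conjTranspose_same
  apply Matrix.PosSemidef.diagonal
  intro i
  exact Complex.zero_le_real.mpr (Real.sqrt_nonneg _)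

lemma sqrt_mul_self {M : Matrix n n ℂ} (h : M.PosSemidef) : h.sqrt * h.sqrt = M := by
  unfold sqrt
  have hu : (star h.1.eigenvectorUnitary : Matrix n n ℂ) * h.1.eigenvectorUnitary.1 = 1 :=
    Matrix.mem_unitaryGroup_iff'.mp h.1.eigenvectorUnitary.2
  calc h.1.eigenvectorUnitary.1 * Matrix.diagonal ((↑) ∘ (√·) ∘ h.1.eigenvalues) *
        (star h.1.eigenvectorUnitary : Matrix n n ℂ) *
        (h.1.eigenvectorUnitary.1 * Matrix.diagonal ((↑) ∘ (√·) ∘ h.1.eigenvalues) *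
        (star h.1.eigenvectorUnitary : Matrix n n ℂ))
      = h.1.eigenvectorUnitary.1 * (Matrix.diagonal ((↑) ∘ (√·) ∘ h.1.eigenvalues) *
        ((star h.1.eigenvectorUnitary : Matrix n n ℂ) * h.1.eigenvectorUnitary.1) *
        Matrix.diagonal ((↑) ∘ (√·) ∘ h.1.eigenvalues)) *
        (star h.1.eigenvectorUnitary : Matrix n n ℂ) := by noncomm_ring
    _ = h.1.eigenvectorUnitary.1 * Matrix.diagonal (fun i => (h.1.eigenvalues i : ℂ)) *
        (star h.1.eigenvectorUnitary : Matrix n n ℂ) := by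
      have hd : (fun i => ((↑) ∘ (√·) ∘ h.1.eigenvalues) i * ((↑) ∘ (√·) ∘ h.1.eigenvalues) i)
          = fun i => (h.1.eigenvalues i : ℂ) := by
        funext i
        simp only [Function.comp_apply]
        rw [← Complex.ofReal_mul, Real.mul_self_sqrt (h.eigenvalues_nonneg i)]
      rw [hu, Matrix.mul_one, Matrix.diagonal_mul_diagonal, hd]
    _ = M := h.1.spectral_theorem.symm

end Matrix.PosSemidef

open scoped InnerProductSpace

namespace AvgFid

open Matrix Complex

variable {n : Type*} [Fintype n] [DecidableEq n]

/-- trace norm helper -/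
noncomputable def T (M : Matrix n n ℂ) : ℝ := (matSqrt (M * Mᴴ)).trace.re

lemma matSqrt_of_posSemidef {M : Matrix n n ℂ} (h : M.PosSemidef) : matSqrt M = h.sqrt := by
  unfold matSqrt
  exact dif_pos h

lemma matSqrt_posSemidef (M : Matrix n n ℂ) : (matSqrt M).PosSemidef := by
  unfold matSqrt
  split
  · rename_i h
    exact h.posSemidef_sqrt
  · exact Matrix.PosSemidef.zero



lemma diag_entry_nonneg {A : Matrix n n ℂ} (hA : A.PosSemidef) (i : n) : 0 ≤ A i i := by
  exact hA.diag_nonneg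

lemma trace_re_nonneg {A : Matrix n n ℂ} (hA : A.PosSemidef) : 0 ≤ A.trace.re := by
  rw [Matrix.trace]
  simp only [Complex.re_sum]
  refine Finset.sum_nonneg fun i _ => ?_
  exact (Complex.nonneg_iff.mp (diag_entry_nonneg hA i)).1

lemma dot_cs (v w : n → ℂ) :
    (dotProduct (star v) w).re ≤
      Real.sqrt (dotProduct (star v) v).re * Real.sqrt (dotProduct (star w) w).re := by
  let x : EuclideanSpace ℂ n := (WithLp.equiv 2 _).symm v
  let y : EuclideanSpace ℂ n := (WithLp.equiv 2 _).symm w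
  have hxy : ⟪x, y⟫_ℂ = dotProduct (star v) w :=
    (EuclideanSpace.inner_toLp_toLp v w).trans (dotProduct_comm _ _)
  have hxx : ⟪x, x⟫_ℂ = dotProduct (star v) v :=
    (EuclideanSpace.inner_toLp_toLp v v).trans (dotProduct_comm _ _)
  have hyy : ⟪y, y⟫_ℂ = dotProduct (star w) w :=
    (EuclideanSpace.inner_toLp_toLp w w).trans (dotProduct_comm _ _)
  have h1 : (⟪x, y⟫_ℂ).re ≤ ‖x‖ * ‖y‖ := re_inner_le_norm (𝕜 := ℂ) x y
  have hx : ‖x‖ = Real.sqrt ((⟪x, x⟫_ℂ).re) := by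
    rw [@norm_eq_sqrt_re_inner ℂ]; rfl
  have hy : ‖y‖ = Real.sqrt ((⟪y, y⟫_ℂ).re) := by
    rw [@norm_eq_sqrt_re_inner ℂ]; rfl
  rw [← hxy, ← hxx, ← hyy]
  rw [hx, hy] at h1
  exact h1


lemma dot_self_re_nonneg (v : n → ℂ) : 0 ≤ (dotProduct (star v) v).re :=
  (Complex.nonneg_iff.mp (dotProduct_star_self_nonneg v)).1

lemma trace_conjTranspose_mul (A B : Matrix n n ℂ) :
    (Aᴴ * B).trace = dotProduct (star (fun p : n × n => A p.1 p.2))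
      (fun p : n × n => B p.1 p.2) := by
  simp only [Matrix.trace, Matrix.diag, Matrix.mul_apply, Matrix.conjTranspose_apply,
    dotProduct, Fintype.sum_prod_type, Pi.star_apply, RCLike.star_def]
  rw [Finset.sum_comm]

lemma trace_cs (A B : Matrix n n ℂ) :
    ((Aᴴ * B).trace.re) ^ 2 ≤ (Aᴴ * A).trace.re * (Bᴴ * B).trace.re := by
  set v : n × n → ℂ := fun p => A p.1 p.2
  set w : n × n → ℂ := fun p => B p.1 p.2
  have hAB := trace_conjTranspose_mul A B
  have hAA := trace_conjTranspose_mul A A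
  have hBB := trace_conjTranspose_mul B B
  rw [hAB, hAA, hBB]
  have ha := dot_self_re_nonneg v
  have hb := dot_self_re_nonneg w
  have h1 := dot_cs v w
  have h2 := dot_cs v (-w)
  have hneg : (dotProduct (star v) (-w)).re = -(dotProduct (star v) w).re := by
    rw [dotProduct_neg]; simp
  have hww : dotProduct (star (-w)) (-w) = dotProduct (star w) w := by
    rw [star_neg, neg_dotProduct, dotProduct_neg, neg_neg]
  rw [hneg, hww] at h2
  have hsq : (Real.sqrt (dotProduct (star v) v).re *
      Real.sqrt (dotProduct (star w) w).re) ^ 2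
      = (dotProduct (star v) v).re * (dotProduct (star w) w).re := by
    rw [mul_pow, Real.sq_sqrt ha, Real.sq_sqrt hb]
  calc ((dotProduct (star v) w).re) ^ 2
      ≤ (Real.sqrt (dotProduct (star v) v).re *
          Real.sqrt (dotProduct (star w) w).re) ^ 2 := by
        apply sq_le_sq' (by linarith) h1
    _ = _ := hsq

/-- pairing identity: ⟨v, W u⟩ = ⟨Wᴴ v, u⟩ for dot products. -/
lemma dot_mulVec_eq (W : Matrix n n ℂ) (v u : n → ℂ) :
    dotProduct (star v) (W *ᵥ u) = dotProduct (star (Wᴴ *ᵥ v)) u := by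
  rw [Matrix.dotProduct_mulVec, Matrix.star_mulVec, Matrix.conjTranspose_conjTranspose]

lemma contraction_iff (W : Matrix n n ℂ) :
    (1 - W * Wᴴ).PosSemidef ↔ ∀ v : n → ℂ,
      (dotProduct (star (Wᴴ *ᵥ v)) (Wᴴ *ᵥ v)).re ≤ (dotProduct (star v) v).re := by
  constructor
  · intro h v
    have h2 := h.dotProduct_mulVec_nonneg v
    rw [Matrix.sub_mulVec, Matrix.one_mulVec, dotProduct_sub, ← Matrix.mulVec_mulVec,
      dot_mulVec_eq] at h2
    have := (Complex.nonneg_iff.mp h2).1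
    rw [Complex.sub_re] at this
    linarith
  · intro h
    have herm : (1 - W * Wᴴ).IsHermitian := by
      apply Matrix.IsHermitian.sub Matrix.isHermitian_one
      exact Matrix.isHermitian_mul_conjTranspose_self W
    refine Matrix.PosSemidef.of_dotProduct_mulVec_nonneg herm fun v => ?_
    rw [Matrix.sub_mulVec, Matrix.one_mulVec, dotProduct_sub, ← Matrix.mulVec_mulVec,
      dot_mulVec_eq]
    have h1 := dotProduct_star_self_nonneg v
    have h2 := dotProduct_star_self_nonneg (Wᴴ *ᵥ v)
    rw [Complex.nonneg_iff] at h1 h2 ⊢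
    constructor
    · rw [Complex.sub_re]; have := h v; linarith
    · rw [Complex.sub_im]; rw [← h1.2, ← h2.2]; ring

lemma contraction_flip {W : Matrix n n ℂ} (h : (1 - W * Wᴴ).PosSemidef) :
    (1 - Wᴴ * W).PosSemidef := by
  have key := (contraction_iff W).mp h
  have goal : (1 - Wᴴ * (Wᴴ)ᴴ).PosSemidef := by
    rw [contraction_iff]
    intro v
    rw [Matrix.conjTranspose_conjTranspose]
    set u := W *ᵥ v with hu
    set a := (dotProduct (star u) u).re with ha
    set b := (dotProduct (star v) v).re with hb
    have ha0 : 0 ≤ a := dot_self_re_nonneg u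
    have hb0 : 0 ≤ b := dot_self_re_nonneg v
    have step1 : a ≤ Real.sqrt a * Real.sqrt b := by
      have e1 : dotProduct (star u) u = dotProduct (star (Wᴴ *ᵥ u)) v := by
        rw [hu]
        exact dot_mulVec_eq W u v
      have e2 := dot_cs (Wᴴ *ᵥ u) v
      have e3 : Real.sqrt (dotProduct (star (Wᴴ *ᵥ u)) (Wᴴ *ᵥ u)).re ≤ Real.sqrt a :=
        Real.sqrt_le_sqrt (key u)
      calc a = (dotProduct (star (Wᴴ *ᵥ u)) v).re := by rw [ha, e1]
        _ ≤ Real.sqrt (dotProduct (star (Wᴴ *ᵥ u)) (Wᴴ *ᵥ u)).re * Real.sqrt b := e2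
        _ ≤ Real.sqrt a * Real.sqrt b := by
            apply mul_le_mul_of_nonneg_right e3 (Real.sqrt_nonneg _)
    nlinarith [Real.sq_sqrt ha0, Real.sq_sqrt hb0, Real.sqrt_nonneg a, Real.sqrt_nonneg b]
  rwa [Matrix.conjTranspose_conjTranspose] at goal

lemma contraction_mul {A B : Matrix n n ℂ} (hA : (1 - A * Aᴴ).PosSemidef)
    (hB : (1 - B * Bᴴ).PosSemidef) : (1 - (A * B) * (A * B)ᴴ).PosSemidef := by
  have e : 1 - (A * B) * (A * B)ᴴ = (1 - A * Aᴴ) + A * (1 - B * Bᴴ) * Aᴴ := by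
    rw [Matrix.conjTranspose_mul]
    noncomm_ring
  rw [e]
  exact hA.add (hB.mul_mul_conjTranspose_same A)

lemma trace_re_mono {P X : Matrix n n ℂ} (hP : P.PosSemidef)
    (hX : (1 - X * Xᴴ).PosSemidef) : (P * (X * Xᴴ)).trace.re ≤ P.trace.re := by
  obtain ⟨Q, hQpsd, hQherm, hQQ⟩ :
      ∃ Q : Matrix n n ℂ, Q.PosSemidef ∧ Qᴴ = Q ∧ Q * Q = P :=
    ⟨hP.sqrt, hP.posSemidef_sqrt, hP.posSemidef_sqrt.1.eq, hP.sqrt_mul_self⟩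
  have key : (Q * (1 - X * Xᴴ) * Qᴴ).trace = P.trace - (P * (X * Xᴴ)).trace := by
    rw [hQherm]
    have e : Q * (1 - X * Xᴴ) * Q = Q * Q - Q * (X * Xᴴ) * Q := by noncomm_ring
    rw [e, Matrix.trace_sub, Matrix.trace_mul_cycle (A := Q) (B := X * Xᴴ) (C := Q), hQQ]
  have hpos : 0 ≤ (Q * (1 - X * Xᴴ) * Qᴴ).trace.re :=
    trace_re_nonneg (hX.mul_mul_conjTranspose_same _)
  rw [key, Complex.sub_re] at hpos
  linarith

section Dmat

variable {H : Matrix n n ℂ} (hH : H.PosSemidef)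

/-- functional calculus via the eigendecomposition of a PSD matrix -/
noncomputable def Dmat (f : ℝ → ℝ) : Matrix n n ℂ :=
  hH.1.eigenvectorUnitary.1 * Matrix.diagonal (fun i => (f (hH.1.eigenvalues i) : ℂ)) *
    (star hH.1.eigenvectorUnitary.1)

lemma unit_mul : (star hH.1.eigenvectorUnitary.1 : Matrix n n ℂ) * hH.1.eigenvectorUnitary.1 = 1 :=
  Matrix.mem_unitaryGroup_iff'.mp hH.1.eigenvectorUnitary.2

lemma mul_unit : (hH.1.eigenvectorUnitary.1 : Matrix n n ℂ) * star hH.1.eigenvectorUnitary.1 = 1 :=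
  Matrix.mem_unitaryGroup_iff.mp hH.1.eigenvectorUnitary.2

lemma Dmat_mul (f g : ℝ → ℝ) :
    Dmat hH f * Dmat hH g = Dmat hH (fun t => f t * g t) := by
  have key : ∀ (U sU B D : Matrix n n ℂ), sU * U = 1 →
      (U * B * sU) * (U * D * sU) = U * (B * D) * sU := by
    intro U sU B D h
    calc (U * B * sU) * (U * D * sU) = U * (B * (sU * U) * D) * sU := by noncomm_ring
      _ = U * (B * D) * sU := by rw [h, Matrix.mul_one]
  unfold Dmat
  rw [key _ _ _ _ (unit_mul hH), Matrix.diagonal_mul_diagonal]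
  norm_cast

lemma Dmat_psd (f : ℝ → ℝ) (hf : ∀ t, 0 ≤ f t) : (Dmat hH f).PosSemidef := by
  unfold Dmat
  rw [Matrix.star_eq_conjTranspose]
  apply Matrix.PosSemidef.mul_mul_conjTranspose_same
  refine Matrix.posSemidef_diagonal_iff.mpr fun i => ?_
  rw [Complex.nonneg_iff]
  constructor
  · simpa using hf _
  · simp

lemma Dmat_herm (f : ℝ → ℝ) : (Dmat hH f)ᴴ = Dmat hH f := by
  unfold Dmat
  rw [Matrix.conjTranspose_mul, Matrix.conjTranspose_mul, Matrix.diagonal_conjTranspose]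
  simp only [Matrix.star_eq_conjTranspose, Matrix.conjTranspose_conjTranspose]
  have e : star (fun i => (f (hH.1.eigenvalues i) : ℂ))
      = (fun i => (f (hH.1.eigenvalues i) : ℂ)) := by
    funext i
    simp [Pi.star_apply, Complex.conj_ofReal]
  rw [e, Matrix.mul_assoc]

lemma Dmat_id : Dmat hH (fun t => t) = H := by
  unfold Dmat
  exact hH.1.spectral_theorem.symm

lemma Dmat_one : Dmat hH (fun _ => 1) = 1 := by
  unfold Dmat
  simp only [Complex.ofReal_one]
  rw [show (Matrix.diagonal (fun _ : n => (1 : ℂ))) = 1 from Matrix.diagonal_one, Matrix.mul_one]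
  exact mul_unit hH

lemma Dmat_zero : Dmat hH (fun _ => 0) = 0 := by
  unfold Dmat
  simp

lemma Dmat_sqrt : Dmat hH Real.sqrt = hH.sqrt := rfl

lemma Dmat_congr {f g : ℝ → ℝ} (h : ∀ t, 0 ≤ t → f t = g t) : Dmat hH f = Dmat hH g := by
  have e : (fun i => (f (hH.1.eigenvalues i) : ℂ)) = (fun i => (g (hH.1.eigenvalues i) : ℂ)) := by
    funext i
    norm_cast
    exact h _ (hH.eigenvalues_nonneg i)
  unfold Dmat
  rw [e]

lemma Dmat_trace (f : ℝ → ℝ) :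
    (Dmat hH f).trace = ((∑ i, f (hH.1.eigenvalues i) : ℝ) : ℂ) := by
  unfold Dmat
  rw [Matrix.trace_mul_cycle, unit_mul hH, Matrix.one_mul, Matrix.trace_diagonal]
  push_cast
  rfl

lemma Dmat_sub (f g : ℝ → ℝ) :
    Dmat hH f - Dmat hH g = Dmat hH (fun t => f t - g t) := by
  unfold Dmat
  have e : Matrix.diagonal (fun i => ((f (hH.1.eigenvalues i) - g (hH.1.eigenvalues i) : ℝ) : ℂ))
      = Matrix.diagonal (fun i => (f (hH.1.eigenvalues i) : ℂ))
        - Matrix.diagonal (fun i => (g (hH.1.eigenvalues i) : ℂ)) := by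
    simp only [Complex.ofReal_sub, ← Matrix.diagonal_sub]
  rw [e, Matrix.mul_sub, Matrix.sub_mul]

end Dmat

lemma T_nonneg (M : Matrix n n ℂ) : 0 ≤ T M := trace_re_nonneg (matSqrt_posSemidef _)

set_option maxHeartbeats 1000000 in
lemma exists_good (M : Matrix n n ℂ) :
    ∃ P C : Matrix n n ℂ, P.PosSemidef ∧ (1 - C * Cᴴ).PosSemidef ∧ P * C = M ∧ M * Cᴴ = P ∧
      P.trace = ((T M : ℝ) : ℂ) := by
  have hH : (M * Mᴴ).PosSemidef := Matrix.posSemidef_self_mul_conjTranspose M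
  set g : ℝ → ℝ := fun t => if 0 < t then (Real.sqrt t)⁻¹ else 0 with hg
  set p : ℝ → ℝ := fun t => if 0 < t then 1 else 0 with hp
  have hg0 : ∀ t, 0 ≤ g t := by
    intro t; rw [hg]; dsimp only; split <;> positivity
  refine ⟨Dmat hH Real.sqrt, Dmat hH g * M,
    Dmat_psd hH _ (fun t => Real.sqrt_nonneg t), ?_, ?_, ?_, ?_⟩
  · -- contraction
    have hCC : (Dmat hH g * M) * (Dmat hH g * M)ᴴ = Dmat hH p := by
      rw [Matrix.conjTranspose_mul, Dmat_herm hH g]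
      have e1 : Dmat hH g * M * (Mᴴ * Dmat hH g) = Dmat hH g * (M * Mᴴ) * Dmat hH g := by
        noncomm_ring
      have e2 : Dmat hH g * Dmat hH (fun t => t) * Dmat hH g = Dmat hH p := by
        rw [Dmat_mul, Dmat_mul]
        apply Dmat_congr
        intro t ht
        rw [hg, hp]
        dsimp only
        by_cases h : 0 < t
        · rw [if_pos h, if_pos h]
          have hs : Real.sqrt t ≠ 0 := ne_of_gt (Real.sqrt_pos.mpr h)
          field_simp
          rw [Real.sq_sqrt ht]
        · rw [if_neg h, if_neg h]
          ring
      rw [Dmat_id hH] at e2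
      rw [e1, e2]
    rw [hCC, ← Dmat_one hH, Dmat_sub]
    apply Dmat_psd
    intro t
    rw [hp]; dsimp only; split <;> norm_num
  · -- P * C = M
    rw [← Matrix.mul_assoc, Dmat_mul]
    have e3 : Dmat hH (fun t => Real.sqrt t * g t) = Dmat hH p := by
      apply Dmat_congr
      intro t ht
      rw [hg, hp]; dsimp only
      by_cases h : 0 < t
      · rw [if_pos h, if_pos h]
        exact mul_inv_cancel₀ (ne_of_gt (Real.sqrt_pos.mpr h))
      · rw [if_neg h, if_neg h, mul_zero]
    rw [e3]
    -- show Dmat hH p * M = M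
    have key : (Dmat hH p * M - M) * (Dmat hH p * M - M)ᴴ = 0 := by
      have hq : Dmat hH p * M - M = Dmat hH (fun t => p t - 1) * M := by
        rw [← Dmat_sub, Dmat_one]
        noncomm_ring
      rw [hq, Matrix.conjTranspose_mul, Dmat_herm hH _]
      have e4 : Dmat hH (fun t => p t - 1) * M * (Mᴴ * Dmat hH (fun t => p t - 1))
          = Dmat hH (fun t => p t - 1) * (M * Mᴴ) * Dmat hH (fun t => p t - 1) := by
        noncomm_ring
      have e5 : Dmat hH (fun t => p t - 1) * Dmat hH (fun t => t)
            * Dmat hH (fun t => p t - 1) = Dmat hH (fun _ => 0) := by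
        rw [Dmat_mul, Dmat_mul]
        apply Dmat_congr
        intro t ht
        rw [hp]; dsimp only
        by_cases h : 0 < t
        · rw [if_pos h]; ring
        · have ht0 : t = 0 := le_antisymm (not_lt.mp h) ht
          rw [if_neg h, ht0]; ring
      rw [Dmat_id hH, Dmat_zero hH] at e5
      rw [e4, e5]
    have h0 : (Dmat hH p * M - M)ᴴ = 0 := by
      rw [← Matrix.conjTranspose_mul_self_eq_zero (A := (Dmat hH p * M - M)ᴴ),
        Matrix.conjTranspose_conjTranspose]
      exact key
    have h1 := congrArg Matrix.conjTranspose h0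
    rw [Matrix.conjTranspose_conjTranspose, Matrix.conjTranspose_zero] at h1
    rwa [sub_eq_zero] at h1
  · -- M * Cᴴ = P
    rw [Matrix.conjTranspose_mul, Dmat_herm hH g, ← Matrix.mul_assoc]
    have e6 : Dmat hH (fun t => t) * Dmat hH g = Dmat hH Real.sqrt := by
      rw [Dmat_mul]
      apply Dmat_congr
      intro t ht
      rw [hg]; dsimp only
      by_cases h : 0 < t
      · rw [if_pos h]
        have hs : Real.sqrt t ≠ 0 := ne_of_gt (Real.sqrt_pos.mpr h)
        field_simp
        rw [Real.sq_sqrt ht]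
      · have ht0 : t = 0 := le_antisymm (not_lt.mp h) ht
        rw [if_neg h, mul_zero, ht0, Real.sqrt_zero]
    rw [Dmat_id hH] at e6
    exact e6
  · -- trace
    rw [Dmat_trace]
    congr 1
    have e7 : matSqrt (M * Mᴴ) = Dmat hH Real.sqrt := by
      rw [matSqrt_of_posSemidef hH, ← Dmat_sqrt]
    rw [T, e7, Dmat_trace, Complex.ofReal_re]

lemma keybound (N V : Matrix n n ℂ) (hV : (1 - V * Vᴴ).PosSemidef) :
    (N * V).trace.re ≤ T N := by
  obtain ⟨P, C, hP, hC, hPC, hMC, htr⟩ := exists_good N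
  obtain ⟨Q, hQpsd, hQherm, hQQ⟩ :
      ∃ Q : Matrix n n ℂ, Q.PosSemidef ∧ Qᴴ = Q ∧ Q * Q = P :=
    ⟨hP.sqrt, hP.posSemidef_sqrt, hP.posSemidef_sqrt.1.eq, hP.sqrt_mul_self⟩
  set X := C * V with hX
  have hXc : (1 - X * Xᴴ).PosSemidef := contraction_mul hC hV
  have hTN : P.trace.re = T N := by rw [htr, Complex.ofReal_re]
  have e : N * V = Qᴴ * (Q * X) := by
    rw [hQherm, hX]
    calc N * V = P * C * V := by rw [hPC]
      _ = Q * (Q * (C * V)) := by rw [← hQQ]; noncomm_ring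
  have cs := trace_cs Q (Q * X)
  have e1 : (Qᴴ * Q).trace.re = T N := by rw [hQherm, hQQ, hTN]
  have e2 : ((Q * X)ᴴ * (Q * X)).trace = (P * (X * Xᴴ)).trace := by
    rw [Matrix.conjTranspose_mul, hQherm]
    have e3 : Xᴴ * Q * (Q * X) = Xᴴ * P * X := by rw [← hQQ]; noncomm_ring
    rw [e3, Matrix.trace_mul_comm, ← Matrix.mul_assoc, Matrix.trace_mul_comm]
  have e4 : ((Q * X)ᴴ * (Q * X)).trace.re ≤ T N := by
    rw [e2, ← hTN]
    exact trace_re_mono hP hXc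
  have hTN0 : 0 ≤ T N := T_nonneg N
  have sq_le : ((N * V).trace.re) ^ 2 ≤ T N ^ 2 := by
    rw [e]
    calc ((Qᴴ * (Q * X)).trace.re) ^ 2
        ≤ (Qᴴ * Q).trace.re * ((Q * X)ᴴ * (Q * X)).trace.re := cs
      _ ≤ T N * T N := by
          apply mul_le_mul e1.le e4 (trace_re_nonneg ?_) hTN0
          · exact Matrix.posSemidef_conjTranspose_mul_self _
      _ = T N ^ 2 := by ring
  calc (N * V).trace.re ≤ |(N * V).trace.re| := le_abs_self _
    _ = Real.sqrt (((N * V).trace.re) ^ 2) := (Real.sqrt_sq_eq_abs _).symm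
    _ ≤ Real.sqrt (T N ^ 2) := Real.sqrt_le_sqrt sq_le
    _ = T N := Real.sqrt_sq hTN0

lemma fidelity_eq_T {ρ : Matrix n n ℂ} (hρ : ρ.PosSemidef) (X : Matrix n n ℂ) :
    fidelity ρ (X * ρ * Xᴴ) = T (matSqrt ρ * X * matSqrt ρ) := by
  unfold fidelity T
  set R := matSqrt ρ with hRdef
  have hR : Rᴴ = R := (matSqrt_posSemidef ρ).1.eq
  have hRR : R * R = ρ := by
    rw [hRdef, matSqrt_of_posSemidef hρ]
    exact hρ.sqrt_mul_self
  have e : R * (X * ρ * Xᴴ) * R = (R * X * R) * (R * X * R)ᴴ := by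
    rw [Matrix.conjTranspose_mul, Matrix.conjTranspose_mul, hR, ← hRR]
    noncomm_ring
  rw [e]

theorem main_ineq
    (ρ : Matrix n n ℂ) (hρ : ρ.PosSemidef) (hρtr : ρ.trace = 1)
    {Ω : Type*} [Fintype Ω] [Nonempty Ω] (O : Ω → Matrix n n ℂ) :
    ((1 : ℝ) / (Fintype.card Ω) ^ 2) *
        ∑ x : Ω, ∑ y : Ω,
          fidelity ρ ((O x * (O y)ᴴ) * ρ * (O x * (O y)ᴴ)ᴴ) ≥
      (((1 : ℝ) / Fintype.card Ω) * ∑ x : Ω, fidelity ρ (O x * ρ * (O x)ᴴ)) ^ 2 := by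
  set R := matSqrt ρ with hRdef
  have hR : Rᴴ = R := (matSqrt_posSemidef ρ).1.eq
  have hRR : R * R = ρ := by
    rw [hRdef, matSqrt_of_posSemidef hρ]
    exact hρ.sqrt_mul_self
  choose P C hPpsd hCcon hPC hMC htr using fun x => exists_good (R * O x * R)
  set S := ∑ x : Ω, T (R * O x * R) with hS
  set B : Ω → Matrix n n ℂ := fun x => (O x)ᴴ * R * C x with hB
  set Z := ∑ x : Ω, B x with hZ
  have hBR : ∀ x, ((B x)ᴴ * R).trace = (((T (R * O x * R)) : ℝ) : ℂ) := by
    intro x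
    have e1 : (B x)ᴴ * R = (C x)ᴴ * (R * O x * R) := by
      rw [hB]
      dsimp only
      rw [Matrix.conjTranspose_mul, Matrix.conjTranspose_mul, hR,
        Matrix.conjTranspose_conjTranspose]
      noncomm_ring
    rw [e1, Matrix.trace_mul_comm, hMC x, htr x]
  have hZR : (Zᴴ * R).trace.re = S := by
    rw [hZ, Matrix.conjTranspose_sum, Finset.sum_mul, Matrix.trace_sum, Complex.re_sum, hS]
    apply Finset.sum_congr rfl
    intro x _
    rw [hBR x, Complex.ofReal_re]
  have hRρ : (Rᴴ * R).trace.re = 1 := by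
    rw [hR, hRR, hρtr, Complex.one_re]
  have hexp : (Zᴴ * Z).trace.re = ∑ x : Ω, ∑ y : Ω, ((B x)ᴴ * B y).trace.re := by
    rw [hZ, Matrix.conjTranspose_sum, Finset.sum_mul, Matrix.trace_sum, Complex.re_sum]
    apply Finset.sum_congr rfl
    intro x _
    rw [Finset.mul_sum, Matrix.trace_sum, Complex.re_sum]
  have hterm : ∀ x y : Ω, ((B x)ᴴ * B y).trace.re ≤ T (R * (O x * (O y)ᴴ) * R) := by
    intro x y
    have em : (B x)ᴴ * B y = (C x)ᴴ * ((R * (O x * (O y)ᴴ) * R) * C y) := by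
      rw [hB]
      dsimp only
      rw [Matrix.conjTranspose_mul, Matrix.conjTranspose_mul, hR,
        Matrix.conjTranspose_conjTranspose]
      noncomm_ring
    have e2 : ((B x)ᴴ * B y).trace
        = ((R * (O x * (O y)ᴴ) * R) * (C y * (C x)ᴴ)).trace := by
      rw [em, Matrix.trace_mul_comm, Matrix.mul_assoc]
    have hV : (1 - (C y * (C x)ᴴ) * (C y * (C x)ᴴ)ᴴ).PosSemidef := by
      apply contraction_mul (hCcon y)
      have hf := contraction_flip (hCcon x)
      rw [Matrix.conjTranspose_conjTranspose]
      exact hf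
    rw [e2]
    exact keybound _ _ hV
  have main : S ^ 2 ≤ ∑ x : Ω, ∑ y : Ω, T (R * (O x * (O y)ᴴ) * R) := by
    have cs := trace_cs Z R
    rw [hZR, hRρ, mul_one, hexp] at cs
    refine cs.trans ?_
    apply Finset.sum_le_sum
    intro x _
    apply Finset.sum_le_sum
    intro y _
    exact hterm x y
  have hfid1 : ∀ x, fidelity ρ (O x * ρ * (O x)ᴴ) = T (R * O x * R) := fun x =>
    fidelity_eq_T hρ (O x)
  have hfid2 : ∀ x y, fidelity ρ ((O x * (O y)ᴴ) * ρ * (O x * (O y)ᴴ)ᴴ)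
      = T (R * (O x * (O y)ᴴ) * R) := fun x y => fidelity_eq_T hρ _
  have hc : (0:ℝ) < (Fintype.card Ω : ℝ) := by
    exact_mod_cast Fintype.card_pos
  rw [ge_iff_le]
  have eq1 : ∑ x : Ω, fidelity ρ (O x * ρ * (O x)ᴴ) = S := by
    rw [hS]
    exact Finset.sum_congr rfl fun x _ => hfid1 x
  have eq2 : ∑ x : Ω, ∑ y : Ω, fidelity ρ ((O x * (O y)ᴴ) * ρ * (O x * (O y)ᴴ)ᴴ)
      = ∑ x : Ω, ∑ y : Ω, T (R * (O x * (O y)ᴴ) * R) :=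
    Finset.sum_congr rfl fun x _ => Finset.sum_congr rfl fun y _ => hfid2 x y
  rw [eq1, eq2]
  have expand : ((1 : ℝ) / Fintype.card Ω * S) ^ 2
      = ((1 : ℝ) / (Fintype.card Ω) ^ 2) * S ^ 2 := by
    field_simp
  rw [expand]
  apply mul_le_mul_of_nonneg_left main
  positivity

end AvgFid

/-- **Theorem (averaged one-point vs two-point fidelity correlators)**: the averaged two-point
fidelity correlator dominates the square of the averaged one-point fidelity correlator. -/
theorem avg_two_point_ge_sq_avg_one_point
    {n : Type*} [Fintype n] [DecidableEq n]
    (ρ : Matrix n n ℂ) (hρ : ρ.PosSemidef) (hρtr : ρ.trace = 1)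
    {Ω : Type*} [Fintype Ω] [Nonempty Ω] (O : Ω → Matrix n n ℂ) :
    ((1 : ℝ) / (Fintype.card Ω) ^ 2) *
        ∑ x : Ω, ∑ y : Ω,
          fidelity ρ ((O x * (O y)ᴴ) * ρ * (O x * (O y)ᴴ)ᴴ) ≥
      (((1 : ℝ) / Fintype.card Ω) * ∑ x : Ω, fidelity ρ (O x * ρ * (O x)ᴴ)) ^ 2 :=
  AvgFid.main_ineq ρ hρ hρtr O
end
end

section
/- Purification formula for the optimized non-abelian one-point fidelity: let ρ be a density matrix on a finite-dimensional space H of dimension D, let Ψ ∈ H ⊗ H be a purification of ρ (a unit vector with Tr₂ |Ψ⟩⟨Ψ| = ρ, where Tr₂ is the partial trace over the second factor), let n ≥ 1, and let (O_α)_{α ∈ Fin n} be matrices on H. Then sup { F(ρ, (Σ_α v_α O_α) ρ (Σ_α v_α O_α)†) : v ∈ ℂⁿ, Σ_α |v_α|² = 1 } = sup { √( Σ_α |⟨Ψ, (O_α ⊗ U) Ψ⟩|² ) : U a D × D unitary matrix }. -/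
noncomputable section

open scoped Matrix Kronecker ComplexOrder

namespace PurifAux

variable {ι : Type*} [Fintype ι] [DecidableEq ι]

lemma spectral_old {A : Matrix ι ι ℂ} (hA : A.IsHermitian) :
    A = (hA.eigenvectorUnitary : Matrix ι ι ℂ) * Matrix.diagonal (RCLike.ofReal ∘ hA.eigenvalues)
      * star (hA.eigenvectorUnitary : Matrix ι ι ℂ) := by
  conv_lhs => rw [hA.spectral_theorem, Unitary.conjStarAlgAut_apply]

open scoped MatrixOrder in
lemma matSqrt_eq {M : Matrix ι ι ℂ} (h : M.PosSemidef) : matSqrt M = CFC.sqrt M := by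
  rw [matSqrt, dif_pos h, CFC.sqrt_eq_cfc, cfc_nnreal_eq_real _ M h.nonneg, h.1.cfc_eq,
    Matrix.IsHermitian.cfc, Unitary.conjStarAlgAut_apply]
  congr 2
  ext i j
  simp only [Matrix.diagonal_apply, Function.comp_apply, Real.coe_sqrt, Real.coe_toNNReal',
    max_eq_left (h.eigenvalues_nonneg i)]
  rfl

lemma matSqrt_posSemidef {M : Matrix ι ι ℂ} (h : M.PosSemidef) : (matSqrt M).PosSemidef := by
  open scoped MatrixOrder in (rw [matSqrt_eq h]; exact Matrix.nonneg_iff_posSemidef.mp (CFC.sqrt_nonneg M))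

lemma matSqrt_mul_self {M : Matrix ι ι ℂ} (h : M.PosSemidef) : matSqrt M * matSqrt M = M := by
  open scoped MatrixOrder in (rw [matSqrt_eq h]; exact CFC.sqrt_mul_sqrt_self M h.nonneg)

lemma matSqrt_conjTranspose {M : Matrix ι ι ℂ} (h : M.PosSemidef) :
    (matSqrt M)ᴴ = matSqrt M := (matSqrt_posSemidef h).1

/-- The trace norm of a square complex matrix. -/
noncomputable def tn (B : Matrix ι ι ℂ) : ℝ := (matSqrt (B * Bᴴ)).trace.re

/-- entries of a unitary have absolute value at most 1 -/
lemma unitary_entry_abs_le {U : Matrix ι ι ℂ} (hU : U ∈ Matrix.unitaryGroup ι ℂ)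
    (i j : ι) : ‖U i j‖ ≤ 1 := by
  have h1 : (U * star U) i i = (1 : Matrix ι ι ℂ) i i := by
    rw [Matrix.mem_unitaryGroup_iff.mp hU]
  have h2 : ∑ k, Complex.normSq (U i k) = 1 := by
    simp only [Matrix.mul_apply, Matrix.one_apply_eq, Matrix.star_apply] at h1
    have h1' : (∑ k, (Complex.normSq (U i k) : ℂ)) = 1 := by
      rw [← h1]; exact Finset.sum_congr rfl fun k _ => by
        rw [← Complex.mul_conj]; rfl
    exact_mod_cast h1'
  have h3 : Complex.normSq (U i j) ≤ 1 := by
    rw [← h2]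
    exact Finset.single_le_sum (f := fun k => Complex.normSq (U i k))
      (fun k _ => Complex.normSq_nonneg _) (Finset.mem_univ j)
  rw [← Complex.sq_norm] at h3
  nlinarith [norm_nonneg (U i j)]

lemma trace_diag_mul (d : ι → ℂ) (C : Matrix ι ι ℂ) :
    (Matrix.diagonal d * C).trace = ∑ i, d i * C i i := by
  simp [Matrix.trace, Matrix.diag, Matrix.diagonal_mul]

lemma psd_trace_eq {H : Matrix ι ι ℂ} (hH : H.PosSemidef) :
    H.trace = ((∑ i, hH.1.eigenvalues i : ℝ) : ℂ) := by
  conv_lhs => rw [spectral_old hH.1]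
  rw [Matrix.trace_mul_cycle]
  rw [(Matrix.mem_unitaryGroup_iff'.mp (hH.1.eigenvectorUnitary).2), one_mul]
  simp [Matrix.trace, Matrix.diag]

lemma psd_trace_re {H : Matrix ι ι ℂ} (hH : H.PosSemidef) :
    H.trace.re = ∑ i, hH.1.eigenvalues i := by rw [psd_trace_eq hH]; simp

lemma psd_trace_real {H : Matrix ι ι ℂ} (hH : H.PosSemidef) :
    H.trace = (H.trace.re : ℂ) := by rw [psd_trace_re hH]; exact psd_trace_eq hH

lemma psd_trace_re_nonneg {H : Matrix ι ι ℂ} (hH : H.PosSemidef) : 0 ≤ H.trace.re := by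
  rw [psd_trace_re hH]
  exact Finset.sum_nonneg fun i _ => hH.eigenvalues_nonneg i

lemma psd_abs_trace_mul_unitary_le {H U : Matrix ι ι ℂ} (hH : H.PosSemidef)
    (hU : U ∈ Matrix.unitaryGroup ι ℂ) :
    ‖(H * U).trace‖ ≤ H.trace.re := by
  set Q : Matrix ι ι ℂ := ↑(hH.1.eigenvectorUnitary)
  have hQ : Q ∈ Matrix.unitaryGroup ι ℂ := (hH.1.eigenvectorUnitary).2
  have hC : star Q * U * Q ∈ Matrix.unitaryGroup ι ℂ :=
    mul_mem (mul_mem (Unitary.star_mem hQ) hU) hQ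
  have h1 : (H * U).trace
      = (Matrix.diagonal ((↑) ∘ hH.1.eigenvalues : ι → ℂ) * (star Q * U * Q)).trace := by
    conv_lhs => rw [spectral_old hH.1]
    rw [mul_assoc, mul_assoc, Matrix.trace_mul_comm, mul_assoc]
    rfl
  rw [h1, trace_diag_mul, psd_trace_re hH]
  calc ‖∑ i, ((hH.1.eigenvalues i : ℂ)) * (star Q * U * Q) i i‖
      ≤ ∑ i, ‖((hH.1.eigenvalues i : ℂ)) * (star Q * U * Q) i i‖ :=
        norm_sum_le _ _
    _ ≤ ∑ i, hH.1.eigenvalues i := by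
        apply Finset.sum_le_sum
        intro i _
        rw [norm_mul]
        have h2 := unitary_entry_abs_le hC i i
        have h3 : ‖(hH.1.eigenvalues i : ℂ)‖ = hH.1.eigenvalues i := by
          rw [Complex.norm_real, Real.norm_eq_abs, abs_of_nonneg (hH.eigenvalues_nonneg i)]
        rw [h3]
        calc hH.1.eigenvalues i * ‖(star Q * U * Q) i i‖
            ≤ hH.1.eigenvalues i * 1 :=
              mul_le_mul_of_nonneg_left h2 (hH.eigenvalues_nonneg i)
          _ = _ := mul_one _

lemma exists_unitary_row {d : ι → ℝ} (hd : ∀ i, 0 ≤ d i) {Y : Matrix ι ι ℂ}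
    (hY : Y * Yᴴ = Matrix.diagonal (fun i => (d i : ℂ))) :
    ∃ W ∈ Matrix.unitaryGroup ι ℂ,
      Y = Matrix.diagonal (fun i => (Real.sqrt (d i) : ℂ)) * W := by
  have hrow : ∀ i j, ∑ k, Y i k * (starRingEnd ℂ) (Y j k)
      = if i = j then (d i : ℂ) else 0 := by
    intro i j
    have := congrFun (congrFun hY i) j
    simpa [Matrix.mul_apply, Matrix.conjTranspose_apply, Matrix.diagonal_apply] using this
  have hzero : ∀ i, d i = 0 → ∀ k, Y i k = 0 := by
    intro i hi k
    have h1 : ∑ k, (Complex.normSq (Y i k) : ℂ) = 0 := by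
      have h0 := hrow i i
      simp only [hi, Complex.ofReal_zero, ite_self] at h0
      have h1' : ∑ k, (Complex.normSq (Y i k) : ℂ) = ∑ k, Y i k * (starRingEnd ℂ) (Y i k) :=
        Finset.sum_congr rfl fun k _ => by rw [← Complex.mul_conj]
      rw [h1', h0]
    have h2 : ∑ k, Complex.normSq (Y i k) = 0 := by exact_mod_cast h1
    have h3 := (Finset.sum_eq_zero_iff_of_nonneg
      (fun k _ => Complex.normSq_nonneg (Y i k))).mp h2 k (Finset.mem_univ k)
    exact Complex.normSq_eq_zero.mp h3
  set v : ι → EuclideanSpace ℂ ι :=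
    fun i => (WithLp.equiv 2 (ι → ℂ)).symm (fun k => ((Real.sqrt (d i) : ℂ))⁻¹ * Y i k) with hv
  have hVinner : ∀ i j, (inner ℂ (v i) (v j) : ℂ)
      = (starRingEnd ℂ) ((Real.sqrt (d i) : ℂ))⁻¹ * ((Real.sqrt (d j) : ℂ))⁻¹
        * (if j = i then (d j : ℂ) else 0) := by
    intro i j
    rw [← hrow j i]
    simp only [hv, PiLp.inner_apply, RCLike.inner_apply, WithLp.equiv_symm_apply, PiLp.toLp_apply]
    rw [Finset.mul_sum]
    apply Finset.sum_congr rfl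
    intro k _
    simp only [map_mul, map_inv₀, Complex.conj_ofReal]
    ring
  have horth : Orthonormal ℂ (Set.restrict {i | d i ≠ 0} v) := by
    rw [orthonormal_iff_ite]
    rintro ⟨i, hi⟩ ⟨j, hj⟩
    show (inner ℂ (v i) (v j) : ℂ) = _
    rw [hVinner i j]
    by_cases hij : i = j
    · subst hij
      simp only [if_pos rfl, Subtype.mk.injEq, if_true, eq_self_iff_true]
      rw [map_inv₀, Complex.conj_ofReal]
      have hdi : 0 < d i := lt_of_le_of_ne (hd i) (Ne.symm hi)
      have hs : (Real.sqrt (d i) : ℂ) ≠ 0 := by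
        simp [Real.sqrt_ne_zero'.mpr hdi]
      have hss : (Real.sqrt (d i) : ℂ) * (Real.sqrt (d i) : ℂ) = (d i : ℂ) := by
        rw [← Complex.ofReal_mul, Real.mul_self_sqrt (hd i)]
      field_simp
      rw [sq, hss]
    · have : ¬ (j = i) := fun h => hij h.symm
      simp [this, hij]
  obtain ⟨b, hb⟩ := horth.exists_orthonormalBasis_extension_of_card_eq
    (finrank_euclideanSpace (𝕜 := ℂ) (ι := ι))
  refine ⟨Matrix.of (fun i j => b i j), ?_, ?_⟩
  · rw [Matrix.mem_unitaryGroup_iff]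
    ext i j
    have hinner := orthonormal_iff_ite.mp b.orthonormal j i
    simp only [PiLp.inner_apply, RCLike.inner_apply] at hinner
    simp only [Matrix.mul_apply, Matrix.of_apply, Matrix.star_apply, Matrix.one_apply]
    calc ∑ k, b i k * star (b j k)
        = ∑ k, (starRingEnd ℂ) (b j k) * b i k := by
          apply Finset.sum_congr rfl; intro k _; rw [mul_comm]; rfl
      _ = if j = i then 1 else 0 := by
          rw [← hinner]; exact Finset.sum_congr rfl fun k _ => mul_comm _ _
      _ = if i = j then 1 else 0 := by by_cases h : i = j <;> simp [h, eq_comm]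
  · ext i j
    rw [Matrix.diagonal_mul, Matrix.of_apply]
    by_cases hi : d i = 0
    · simp [hi, hzero i hi j]
    · have hbi : b i = v i := hb i hi
      have hdi : 0 < d i := lt_of_le_of_ne (hd i) (Ne.symm hi)
      have hs : (Real.sqrt (d i) : ℂ) ≠ 0 := by
        simp [Real.sqrt_ne_zero'.mpr hdi]
      rw [hbi]
      simp only [hv, WithLp.equiv_symm_apply, PiLp.toLp_apply]
      field_simp

lemma exists_unitary_polar (X : Matrix ι ι ℂ) :
    ∃ W ∈ Matrix.unitaryGroup ι ℂ, X = matSqrt (X * Xᴴ) * W := by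
  have h1 : (X * Xᴴ).PosSemidef := Matrix.posSemidef_self_mul_conjTranspose X
  set Q : Matrix ι ι ℂ := ↑(h1.1.eigenvectorUnitary) with hQdef
  have hQ : Q ∈ Matrix.unitaryGroup ι ℂ := (h1.1.eigenvectorUnitary).2
  have hQs : star Q * Q = 1 := Matrix.mem_unitaryGroup_iff'.mp hQ
  have hQs' : Q * star Q = 1 := Matrix.mem_unitaryGroup_iff.mp hQ
  set d := h1.1.eigenvalues with hd
  have hdn : ∀ i, 0 ≤ d i := h1.eigenvalues_nonneg
  set Y : Matrix ι ι ℂ := star Q * X with hYdef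
  have hYY : Y * Yᴴ = Matrix.diagonal (fun i => (d i : ℂ)) := by
    have hYc : Yᴴ = Xᴴ * Q := by
      rw [hYdef, Matrix.conjTranspose_mul, Matrix.star_eq_conjTranspose,
        Matrix.conjTranspose_conjTranspose]
    rw [hYc, hYdef]
    have : star Q * X * (Xᴴ * Q) = star Q * (X * Xᴴ) * Q := by noncomm_ring
    rw [this, spectral_old h1.1]
    rw [show star Q * (Q * Matrix.diagonal (RCLike.ofReal ∘ d) * star Q) * Q
        = (star Q * Q) * Matrix.diagonal (RCLike.ofReal ∘ d) * (star Q * Q) by noncomm_ring]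
    rw [hQs, one_mul, mul_one]
    rfl
  obtain ⟨W, hW, hYW⟩ := exists_unitary_row hdn hYY
  set S : Matrix ι ι ℂ := Q * Matrix.diagonal (fun i => (Real.sqrt (d i) : ℂ)) * star Q with hS
  have hSpsd : S.PosSemidef := by
    rw [hS, Matrix.star_eq_conjTranspose]
    exact Matrix.PosSemidef.mul_mul_conjTranspose_same
      (Matrix.posSemidef_diagonal_iff.mpr fun i =>
        Complex.zero_le_real.mpr (Real.sqrt_nonneg _)) Q
  have hSsq : S ^ 2 = X * Xᴴ := by
    rw [sq, hS]
    rw [show Q * Matrix.diagonal (fun i => (Real.sqrt (d i) : ℂ)) * star Q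
          * (Q * Matrix.diagonal (fun i => (Real.sqrt (d i) : ℂ)) * star Q)
        = Q * (Matrix.diagonal (fun i => (Real.sqrt (d i) : ℂ)) * (star Q * Q)
            * Matrix.diagonal (fun i => (Real.sqrt (d i) : ℂ))) * star Q by noncomm_ring]
    rw [hQs, mul_one, Matrix.diagonal_mul_diagonal]
    have hdd : (fun i => (Real.sqrt (d i) : ℂ) * (Real.sqrt (d i) : ℂ))
        = (RCLike.ofReal ∘ d : ι → ℂ) := by
      funext i
      show ((Real.sqrt (d i) : ℂ)) * ((Real.sqrt (d i) : ℂ)) = ((d i : ℝ) : ℂ)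
      rw [← Complex.ofReal_mul, Real.mul_self_sqrt (hdn i)]
    rw [hdd, ← spectral_old h1.1]
  have hSeq : S = matSqrt (X * Xᴴ) := by
    rw [matSqrt_eq h1]
    open scoped MatrixOrder in
    exact (CFC.sqrt_unique (by rw [← sq]; exact hSsq) hSpsd.nonneg).symm
  refine ⟨Q * W, mul_mem hQ hW, ?_⟩
  rw [← hSeq, hS]
  rw [show Q * Matrix.diagonal (fun i => (Real.sqrt (d i) : ℂ)) * star Q * (Q * W)
      = Q * (Matrix.diagonal (fun i => (Real.sqrt (d i) : ℂ)) * ((star Q * Q) * W)) by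
    noncomm_ring]
  rw [hQs, one_mul, ← hYW, hYdef]
  rw [← mul_assoc, hQs', one_mul]

lemma tn_nonneg (B : Matrix ι ι ℂ) : 0 ≤ tn B :=
  psd_trace_re_nonneg (matSqrt_posSemidef (Matrix.posSemidef_self_mul_conjTranspose B))

lemma abs_trace_mul_unitary_le (B : Matrix ι ι ℂ) {U : Matrix ι ι ℂ}
    (hU : U ∈ Matrix.unitaryGroup ι ℂ) :
    ‖(B * U).trace‖ ≤ tn B := by
  obtain ⟨W, hW, hBW⟩ := exists_unitary_polar B
  have hH : (matSqrt (B * Bᴴ)).PosSemidef :=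
    matSqrt_posSemidef (Matrix.posSemidef_self_mul_conjTranspose B)
  calc ‖(B * U).trace‖
      = ‖(matSqrt (B * Bᴴ) * (W * U)).trace‖ := by
        conv_lhs => rw [hBW]
        rw [mul_assoc]
    _ ≤ (matSqrt (B * Bᴴ)).trace.re := psd_abs_trace_mul_unitary_le hH (mul_mem hW hU)
    _ = tn B := rfl

lemma exists_unitary_trace_eq (B : Matrix ι ι ℂ) :
    ∃ U ∈ Matrix.unitaryGroup ι ℂ, (B * U).trace = ((tn B : ℝ) : ℂ) := by
  obtain ⟨W, hW, hBW⟩ := exists_unitary_polar B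
  have hH : (matSqrt (B * Bᴴ)).PosSemidef :=
    matSqrt_posSemidef (Matrix.posSemidef_self_mul_conjTranspose B)
  refine ⟨star W, Unitary.star_mem hW, ?_⟩
  conv_lhs => rw [hBW, mul_assoc, Matrix.mem_unitaryGroup_iff.mp hW, mul_one]
  exact psd_trace_real hH

lemma transpose_mem_unitary {U : Matrix ι ι ℂ} (hU : U ∈ Matrix.unitaryGroup ι ℂ) :
    Uᵀ ∈ Matrix.unitaryGroup ι ℂ := by
  have h := Matrix.mem_unitaryGroup_iff'.mp hU
  rw [Matrix.mem_unitaryGroup_iff]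
  have hstar : star (Uᵀ) = (star U)ᵀ := by
    ext i j
    simp [Matrix.star_apply, Matrix.transpose_apply]
  rw [hstar, ← Matrix.transpose_mul, h, Matrix.transpose_one]

lemma kron_inner_eq_trace (O U : Matrix ι ι ℂ) (Ψ : ι × ι → ℂ) :
    star Ψ ⬝ᵥ ((O ⊗ₖ U) *ᵥ Ψ)
      = (O * Matrix.of (fun a b => Ψ (a, b)) * Uᵀ
          * (Matrix.of (fun a b => Ψ (a, b)))ᴴ).trace := by
  simp only [dotProduct, Matrix.mulVec, Matrix.trace, Matrix.diag, Matrix.mul_apply,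
    Matrix.kroneckerMap_apply, Matrix.conjTranspose_apply, Matrix.transpose_apply,
    Matrix.of_apply, Pi.star_apply, dotProduct,
    Fintype.sum_prod_type, Finset.sum_mul, Finset.mul_sum]
  apply Finset.sum_congr rfl; intro a _
  apply Finset.sum_congr rfl; intro b _
  rw [Finset.sum_comm]
  apply Finset.sum_congr rfl; intro c _
  apply Finset.sum_congr rfl; intro d _
  ring

lemma fidelity_eq_tn {ρ : Matrix ι ι ℂ} (hρ : ρ.PosSemidef) (M : Matrix ι ι ℂ) :
    fidelity ρ (M * ρ * Mᴴ) = tn (matSqrt ρ * M * matSqrt ρ) := by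
  have harg : matSqrt ρ * (M * ρ * Mᴴ) * matSqrt ρ
      = (matSqrt ρ * M * matSqrt ρ) * (matSqrt ρ * M * matSqrt ρ)ᴴ := by
    set s := matSqrt ρ with hsdef
    have hsh : sᴴ = s := matSqrt_conjTranspose hρ
    have hss : s * s = ρ := matSqrt_mul_self hρ
    rw [← hss]
    rw [Matrix.conjTranspose_mul, Matrix.conjTranspose_mul, hsh]
    noncomm_ring
  rw [fidelity, harg]
  rfl

end PurifAux

open PurifAux

/-- **Purification formula for the optimized non-abelian one-point fidelity** (Lemma 9). -/
theorem purification_formula_optimized_one_point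
    {ι : Type*} [Fintype ι] [DecidableEq ι]
    (ρ : Matrix ι ι ℂ) (hρ : ρ.PosSemidef) (hρtr : ρ.trace = 1)
    (Ψ : ι × ι → ℂ) (hΨ : ∑ p, ‖Ψ p‖ ^ 2 = 1)
    (hpur : ptraceB (Matrix.vecMulVec Ψ (star Ψ)) = ρ)
    (n : ℕ) (hn : 1 ≤ n) (O : Fin n → Matrix ι ι ℂ) :
    sSup {r : ℝ | ∃ v : Fin n → ℂ, (∑ α, ‖v α‖ ^ 2 = 1) ∧
        r = fidelity ρ ((∑ α, v α • O α) * ρ * (∑ α, v α • O α)ᴴ)} =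
      sSup {r : ℝ | ∃ U : Matrix ι ι ℂ, U ∈ Matrix.unitaryGroup ι ℂ ∧
        r = Real.sqrt (∑ α : Fin n,
              ‖star Ψ ⬝ᵥ ((O α ⊗ₖ U) *ᵥ Ψ)‖ ^ 2)} := by
  classical
  set X : Matrix ι ι ℂ := Matrix.of (fun a b => Ψ (a, b)) with hXdef
  have hXX : X * Xᴴ = ρ := by
    rw [← hpur]
    ext a a'
    simp only [Matrix.mul_apply, Matrix.conjTranspose_apply, ptraceB, Matrix.of_apply,
      Matrix.vecMulVec_apply, Pi.star_apply, hXdef]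
  obtain ⟨W, hW, hXW0⟩ := exists_unitary_polar X
  rw [hXX] at hXW0
  have hWl : W * star W = 1 := Matrix.mem_unitaryGroup_iff.mp hW
  have hρh : (matSqrt ρ)ᴴ = matSqrt ρ := matSqrt_conjTranspose hρ
  have bridge : ∀ (M U' : Matrix ι ι ℂ), (M * X * U'ᵀ * Xᴴ).trace
      = ((matSqrt ρ * M * matSqrt ρ) * (W * U'ᵀ * star W)).trace := by
    intro M U'
    have hXc : Xᴴ = star W * matSqrt ρ := by
      rw [hXW0, Matrix.conjTranspose_mul, hρh, Matrix.star_eq_conjTranspose]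
    have e1 : M * X * U'ᵀ * Xᴴ = (M * matSqrt ρ * (W * U'ᵀ * star W)) * matSqrt ρ := by
      rw [hXc, hXW0]
      noncomm_ring
    rw [e1, Matrix.trace_mul_comm]
    congr 1
    noncomm_ring
  have tdef : ∀ (U' : Matrix ι ι ℂ) (α : Fin n),
      star Ψ ⬝ᵥ ((O α ⊗ₖ U') *ᵥ Ψ) = (O α * X * U'ᵀ * Xᴴ).trace :=
    fun U' α => kron_inner_eq_trace (O α) U' Ψ
  have lin : ∀ (v : Fin n → ℂ) (U' : Matrix ι ι ℂ),
      ((∑ α, v α • O α) * X * U'ᵀ * Xᴴ).trace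
        = ∑ α, v α * (O α * X * U'ᵀ * Xᴴ).trace := by
    intro v U'
    have e2 : (∑ α, v α • O α) * X * U'ᵀ * Xᴴ = ∑ α, v α • (O α * X * U'ᵀ * Xᴴ) := by
      rw [Finset.sum_mul, Finset.sum_mul, Finset.sum_mul]
      exact Finset.sum_congr rfl fun α _ => by
        rw [smul_mul_assoc, smul_mul_assoc, smul_mul_assoc]
    rw [e2, Matrix.trace_sum]
    exact Finset.sum_congr rfl fun α _ => by rw [Matrix.trace_smul]; rfl
  have hUmem : ∀ {U' : Matrix ι ι ℂ}, U' ∈ Matrix.unitaryGroup ι ℂ →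
      W * U'ᵀ * star W ∈ Matrix.unitaryGroup ι ℂ := fun hU' =>
    mul_mem (mul_mem hW (transpose_mem_unitary hU')) (Unitary.star_mem hW)
  set c : Fin n → ℝ := fun α => tn (matSqrt ρ * O α * matSqrt ρ) with hc
  have tb : ∀ {U' : Matrix ι ι ℂ}, U' ∈ Matrix.unitaryGroup ι ℂ → ∀ α : Fin n,
      ‖(O α * X * U'ᵀ * Xᴴ).trace‖ ≤ c α := by
    intro U' hU' α
    rw [bridge]
    exact abs_trace_mul_unitary_le _ (hUmem hU')
  set S := {r : ℝ | ∃ v : Fin n → ℂ, (∑ α, ‖v α‖ ^ 2 = 1) ∧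
      r = fidelity ρ ((∑ α, v α • O α) * ρ * (∑ α, v α • O α)ᴴ)} with hSdef
  set T := {r : ℝ | ∃ U : Matrix ι ι ℂ, U ∈ Matrix.unitaryGroup ι ℂ ∧
      r = Real.sqrt (∑ α : Fin n,
            ‖star Ψ ⬝ᵥ ((O α ⊗ₖ U) *ᵥ Ψ)‖ ^ 2)} with hTdef
  have hTbdd : BddAbove T := by
    refine ⟨Real.sqrt (∑ α, c α ^ 2), ?_⟩
    rintro u ⟨U, hU, rfl⟩
    apply Real.sqrt_le_sqrt
    apply Finset.sum_le_sum
    intro α _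
    rw [tdef]
    exact pow_le_pow_left₀ (norm_nonneg _) (tb hU α) 2
  have hST : ∀ r ∈ S, ∃ u ∈ T, r ≤ u := by
    rintro r ⟨v, hv, rfl⟩
    obtain ⟨U', hU', hU'tr⟩ :=
      exists_unitary_trace_eq (matSqrt ρ * (∑ α, v α • O α) * matSqrt ρ)
    set U : Matrix ι ι ℂ := (star W * U' * W)ᵀ with hUdef
    have hUm : U ∈ Matrix.unitaryGroup ι ℂ :=
      transpose_mem_unitary (mul_mem (mul_mem (Unitary.star_mem hW) hU') hW)
    have hUT : W * Uᵀ * star W = U' := by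
      rw [hUdef, Matrix.transpose_transpose]
      calc W * (star W * U' * W) * star W
          = (W * star W) * U' * (W * star W) := by noncomm_ring
        _ = U' := by rw [hWl, one_mul, mul_one]
    have hsum : ∑ α, v α * (O α * X * Uᵀ * Xᴴ).trace
        = ((tn (matSqrt ρ * (∑ α, v α • O α) * matSqrt ρ) : ℝ) : ℂ) := by
      rw [← lin v U, bridge, hUT, hU'tr]
    refine ⟨Real.sqrt (∑ α : Fin n,
        ‖star Ψ ⬝ᵥ ((O α ⊗ₖ U) *ᵥ Ψ)‖ ^ 2), ⟨U, hUm, rfl⟩, ?_⟩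
    rw [fidelity_eq_tn hρ]
    have h1 : tn (matSqrt ρ * (∑ α, v α • O α) * matSqrt ρ)
        = ‖∑ α, v α * (O α * X * Uᵀ * Xᴴ).trace‖ := by
      rw [hsum, Complex.norm_real, Real.norm_eq_abs, abs_of_nonneg (tn_nonneg _)]
    rw [h1]
    calc ‖∑ α, v α * (O α * X * Uᵀ * Xᴴ).trace‖
        ≤ ∑ α, ‖v α‖ * ‖(O α * X * Uᵀ * Xᴴ).trace‖ := by
          refine (norm_sum_le _ _).trans (le_of_eq ?_)
          exact Finset.sum_congr rfl fun α _ => norm_mul _ _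
      _ ≤ Real.sqrt (∑ α, ‖v α‖ ^ 2)
            * Real.sqrt (∑ α, ‖(O α * X * Uᵀ * Xᴴ).trace‖ ^ 2) :=
          Real.sum_mul_le_sqrt_mul_sqrt _ _ _
      _ = Real.sqrt (∑ α : Fin n,
            ‖star Ψ ⬝ᵥ ((O α ⊗ₖ U) *ᵥ Ψ)‖ ^ 2) := by
          have hv1 : ∑ α, ‖v α‖ ^ 2 = 1 := by
            rw [← hv]
          rw [hv1, Real.sqrt_one, one_mul]
          congr 1
          exact Finset.sum_congr rfl fun α _ => by rw [tdef]
  have hS0 : ∃ r0 ∈ S, 0 ≤ r0 := by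
    refine ⟨_, ⟨Pi.single (⟨0, hn⟩ : Fin n) 1, ?_, rfl⟩, ?_⟩
    · rw [Finset.sum_eq_single (⟨0, hn⟩ : Fin n)]
      · simp
      · intro b _ hb; simp [Pi.single_apply, hb]
      · intro h; exact absurd (Finset.mem_univ _) h
    · rw [fidelity_eq_tn hρ]; exact tn_nonneg _
  have hSbdd : BddAbove S := by
    obtain ⟨Cb, hCb⟩ := hTbdd
    refine ⟨Cb, ?_⟩
    rintro r hr
    obtain ⟨u, huT, hru⟩ := hST r hr
    exact hru.trans (hCb huT)
  have hTS : ∀ u ∈ T, ∃ r ∈ S, u ≤ r := by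
    rintro u ⟨U, hU, rfl⟩
    have habs : ∀ α : Fin n, ‖star Ψ ⬝ᵥ ((O α ⊗ₖ U) *ᵥ Ψ)‖
        = ‖(O α * X * Uᵀ * Xᴴ).trace‖ := fun α => by rw [tdef]
    have hsums : ∑ α : Fin n, ‖star Ψ ⬝ᵥ ((O α ⊗ₖ U) *ᵥ Ψ)‖ ^ 2
        = ∑ α : Fin n, ‖(O α * X * Uᵀ * Xᴴ).trace‖ ^ 2 :=
      Finset.sum_congr rfl fun α _ => by rw [habs]
    set s2 := ∑ α : Fin n, ‖(O α * X * Uᵀ * Xᴴ).trace‖ ^ 2 with hs2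
    have hs2nn : 0 ≤ s2 := Finset.sum_nonneg fun α _ => sq_nonneg _
    by_cases hz : s2 = 0
    · obtain ⟨r0, hr0S, hr00⟩ := hS0
      refine ⟨r0, hr0S, ?_⟩
      rw [hsums, hz, Real.sqrt_zero]
      exact hr00
    · have hs2pos : 0 < s2 := lt_of_le_of_ne hs2nn (Ne.symm hz)
      set s := Real.sqrt s2 with hsdef
      have hspos : 0 < s := Real.sqrt_pos.mpr hs2pos
      have hss : s * s = s2 := Real.mul_self_sqrt hs2nn
      set v : Fin n → ℂ := fun α =>
        (starRingEnd ℂ) ((O α * X * Uᵀ * Xᴴ).trace) / (s : ℂ) with hvdef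
      have hvnorm : ∑ α, ‖v α‖ ^ 2 = 1 := by
        have e3 : ∀ α : Fin n, ‖v α‖ ^ 2
            = ‖(O α * X * Uᵀ * Xᴴ).trace‖ ^ 2 / s ^ 2 := by
          intro α
          rw [hvdef]
          simp only [norm_div, Complex.norm_conj, Complex.norm_real, Real.norm_eq_abs,
            abs_of_nonneg hspos.le, div_pow]
        rw [Finset.sum_congr rfl fun α _ => e3 α, ← Finset.sum_div, ← hs2, sq, hss,
          div_self (ne_of_gt hs2pos)]
      have hvt : ∑ α, v α * (O α * X * Uᵀ * Xᴴ).trace = ((s : ℝ) : ℂ) := by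
        have e4 : ∀ α : Fin n, v α * (O α * X * Uᵀ * Xᴴ).trace
            = ((‖(O α * X * Uᵀ * Xᴴ).trace‖ ^ 2 : ℝ) : ℂ) / (s : ℂ) := by
          intro α
          rw [hvdef, div_mul_eq_mul_div, mul_comm, Complex.mul_conj, Complex.normSq_eq_norm_sq]
        rw [Finset.sum_congr rfl fun α _ => e4 α, ← Finset.sum_div]
        rw [show (∑ α : Fin n, ((‖(O α * X * Uᵀ * Xᴴ).trace‖ ^ 2 : ℝ) : ℂ))
            = ((s2 : ℝ) : ℂ) by rw [hs2]; push_cast; ring]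
        rw [show ((s2 : ℝ) : ℂ) = ((s * s : ℝ) : ℂ) by rw [hss]]
        push_cast
        field_simp
      refine ⟨fidelity ρ ((∑ α, v α • O α) * ρ * (∑ α, v α • O α)ᴴ), ⟨v, hvnorm, rfl⟩, ?_⟩
      rw [fidelity_eq_tn hρ, hsums]
      have h5 : Real.sqrt s2 = ‖
          ((matSqrt ρ * (∑ α, v α • O α) * matSqrt ρ) * (W * Uᵀ * star W)).trace‖ := by
        rw [← bridge, lin, hvt, Complex.norm_real, Real.norm_eq_abs, abs_of_nonneg hspos.le, hsdef]
      rw [h5]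
      exact abs_trace_mul_unitary_le _ (hUmem hU)
  apply le_antisymm
  · apply Real.sSup_le
    · intro r hr
      obtain ⟨u, huT, hru⟩ := hST r hr
      exact hru.trans (le_csSup hTbdd huT)
    · have h1T : Real.sqrt (∑ α : Fin n,
          ‖star Ψ ⬝ᵥ ((O α ⊗ₖ (1 : Matrix ι ι ℂ)) *ᵥ Ψ)‖ ^ 2) ∈ T :=
        ⟨1, one_mem _, rfl⟩
      exact le_trans (Real.sqrt_nonneg _) (le_csSup hTbdd h1T)
  · apply Real.sSup_le
    · intro u hu
      obtain ⟨r, hrS, hur⟩ := hTS u hu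
      exact hur.trans (le_csSup hSbdd hrS)
    · obtain ⟨r0, hr0S, hr00⟩ := hS0
      exact le_trans hr00 (le_csSup hSbdd hr0S)
end
end
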